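/- Let Φ_λ, λ ∈ Λ, be a family of quantum channels and p a probability distribution on Λ. If for each λ the channel Φ_λ has the form 𝒜_λ ⊗ ℬ_λ (a product of local channels), and ρ is a bipartite state admitting a local hidden state model from A to B (i.e., is A→B unsteerable), then Σ_λ p_λ (𝒜_λ ⊗ ℬ_λ)(ρ) is also A→B unsteerable. Proof reduces to: for POVMs {E_{a|x}}, {E_{b|y}}, tr[(E_{a|x} ⊗ E_{b|y})(𝒜⊗ℬ)(ρ)] = tr[(𝒜†(E_{a|x}) ⊗ ℬ†(E_{b|y})) ρ], and the adjoints of CPTP maps applied to POVMs yield POVMs. -/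

import Mathlib

open scoped BigOperators Kronecker ENNReal NNReal ComplexOrder
open Matrix

noncomputable section

/-- A density matrix: positive semidefinite with unit trace. -/
def IsDensity {ι : Type*} [Fintype ι] (ρ : Matrix ι ι ℂ) : Prop :=
  ρ.PosSemidef ∧ ρ.trace = 1

/-- A completely positive trace-preserving map, presented by a Kraus decomposition. -/
def IsCPTP {ι κ : Type*} [Fintype ι] [DecidableEq ι] [Fintype κ] [DecidableEq κ]
    (Φ : Matrix ι ι ℂ → Matrix κ κ ℂ) : Prop :=
  ∃ (r : ℕ) (K : Fin r → Matrix κ ι ℂ),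
    (∀ M, Φ M = ∑ i, K i * M * (K i)ᴴ) ∧ (∑ i, (K i)ᴴ * K i = 1)

/-- Ampliation `Φ ⊗ id` of a superoperator, acting on the first tensor factor. -/
def ampL {ι κ α : Type*} (Φ : Matrix ι ι ℂ → Matrix κ κ ℂ) :
    Matrix (ι × α) (ι × α) ℂ → Matrix (κ × α) (κ × α) ℂ :=
  fun M => Matrix.of fun p q =>
    Φ (Matrix.of fun i j => M (i, p.2) (j, q.2)) p.1 q.1

/-- Ampliation `id ⊗ Λ` of a superoperator, acting on the second tensor factor. -/
def ampR {ι κ α : Type*} (Λ : Matrix ι ι ℂ → Matrix κ κ ℂ) :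
    Matrix (α × ι) (α × ι) ℂ → Matrix (α × κ) (α × κ) ℂ :=
  fun M => Matrix.of fun p q =>
    Λ (Matrix.of fun i j => M (p.1, i) (q.1, j)) p.2 q.2

/-- Tensor product `Φ ⊗ Λ` of superoperators. -/
def tensorMap {ι κ ι' κ' : Type*} (Φ : Matrix ι ι ℂ → Matrix κ κ ℂ)
    (Λ : Matrix ι' ι' ℂ → Matrix κ' κ' ℂ) :
    Matrix (ι × ι') (ι × ι') ℂ → Matrix (κ × κ') (κ × κ') ℂ :=
  fun M => ampL Φ (ampR Λ M)

/-- The positive semidefinite square root of a positive semidefinite matrix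
(the former Mathlib `Matrix.PosSemidef.sqrt`). -/
def posSemidefSqrt {ι : Type*} [Fintype ι] [DecidableEq ι] {A : Matrix ι ι ℂ}
    (hA : A.PosSemidef) : Matrix ι ι ℂ :=
  hA.1.eigenvectorUnitary.1 * diagonal ((↑) ∘ (√·) ∘ hA.1.eigenvalues) *
  (star hA.1.eigenvectorUnitary : Matrix ι ι ℂ)

/-- Trace norm `‖M‖₁ = tr √(MᴴM)`. -/
def traceNorm {ι : Type*} [Fintype ι] [DecidableEq ι] (M : Matrix ι ι ℂ) : ℝ :=
  ((posSemidefSqrt (Matrix.posSemidef_conjTranspose_mul_self M)).trace).re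

/-- Diamond norm: supremum over finite-dimensional ancillas and joint states of the
trace norm of the ampliated output. -/
def diamondNorm {ι κ : Type*} [Fintype ι] [DecidableEq ι] [Fintype κ] [DecidableEq κ]
    (Φ : Matrix ι ι ℂ → Matrix κ κ ℂ) : ℝ :=
  ⨆ a : ℕ, ⨆ ρ : {ρ : Matrix (ι × Fin a) (ι × Fin a) ℂ // IsDensity ρ},
    traceNorm (ampL Φ (α := Fin a) ρ.1)

/-- A bipartite state `ρ` is A→B unsteerable: for all local POVM families
`{E_{a|x}}`, `{F_{b|y}}` there is a (finite) local hidden state model reproducing the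
correlations `tr[(E_{a|x} ⊗ F_{b|y})ρ] = Σ_λ p_λ P(a|x,λ) tr(F_{b|y} σ_λ)`. -/
def Unsteerable {a b : ℕ} (ρ : Matrix (Fin a × Fin b) (Fin a × Fin b) ℂ) : Prop :=
  ∀ (X A Y B : Type) [Fintype X] [Fintype A] [Fintype Y] [Fintype B],
    ∀ (E : X → A → Matrix (Fin a) (Fin a) ℂ) (F : Y → B → Matrix (Fin b) (Fin b) ℂ),
      (∀ x α, (E x α).PosSemidef) → (∀ x, ∑ α, E x α = 1) →
      (∀ y β, (F y β).PosSemidef) → (∀ y, ∑ β, F y β = 1) →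
      ∃ (L : ℕ) (p : Fin L → ℝ) (P : X → A → Fin L → ℝ)
        (σ : Fin L → Matrix (Fin b) (Fin b) ℂ),
        (∀ l, 0 ≤ p l) ∧ (∑ l, p l = 1) ∧
        (∀ x α l, 0 ≤ P x α l) ∧ (∀ x l, ∑ α, P x α l = 1) ∧
        (∀ l, IsDensity (σ l)) ∧
        ∀ x α y β,
          (((E x α) ⊗ₖ (F y β) * ρ).trace).re
            = ∑ l, p l * P x α l * (((F y β) * σ l).trace).re

lemma conjTranspose_kron {m n p q : Type*} (A : Matrix m n ℂ) (B : Matrix p q ℂ) :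
    (A ⊗ₖ B)ᴴ = Aᴴ ⊗ₖ Bᴴ := by
  ext ⟨i,j⟩ ⟨k,l⟩
  simp [conjTranspose_apply, mul_comm]

lemma kron_sum_sum {m n : Type*} [Fintype m] [Fintype n] {r s : ℕ}
    (A : Fin r → Matrix m m ℂ) (B : Fin s → Matrix n n ℂ) :
    (∑ i, A i) ⊗ₖ (∑ j, B j) = ∑ i, ∑ j, A i ⊗ₖ B j := by
  ext ⟨i,j⟩ ⟨k,l⟩
  simp [Matrix.sum_apply, Finset.sum_mul, Finset.mul_sum]
  rw [Finset.sum_comm]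

lemma posSemidef_sum {m : Type*} [Fintype m] {s : ℕ} {f : Fin s → Matrix m m ℂ}
    (h : ∀ i, (f i).PosSemidef) : (∑ i, f i).PosSemidef := by
  classical
  refine Finset.sum_induction f _ (fun _ _ h1 h2 => h1.add h2) Matrix.PosSemidef.zero
    (fun i _ => h i)

lemma tensorMap_kraus {a b r s : ℕ}
    (K : Fin r → Matrix (Fin a) (Fin a) ℂ) (M : Fin s → Matrix (Fin b) (Fin b) ℂ)
    (ρ : Matrix (Fin a × Fin b) (Fin a × Fin b) ℂ) :
    tensorMap (fun X => ∑ i, K i * X * (K i)ᴴ) (fun X => ∑ j, M j * X * (M j)ᴴ) ρ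
      = ∑ i, ∑ j, (K i ⊗ₖ M j) * ρ * (K i ⊗ₖ M j)ᴴ := by
  ext ⟨k, β⟩ ⟨l, γ⟩
  simp only [tensorMap, ampL, ampR, of_apply, Matrix.sum_apply, mul_apply,
    conjTranspose_apply, kroneckerMap_apply, Fintype.sum_prod_type,
    Finset.sum_mul, Finset.mul_sum, star_mul']
  refine Finset.sum_congr rfl fun n _ => ?_
  rw [Finset.sum_congr rfl fun j _ => Finset.sum_comm]
  rw [Finset.sum_comm]
  refine Finset.sum_congr rfl fun m _ => ?_
  refine Finset.sum_congr rfl fun j _ => ?_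
  rw [Finset.sum_comm]
  refine Finset.sum_congr rfl fun j' _ => ?_
  refine Finset.sum_congr rfl fun i _ => ?_
  refine Finset.sum_congr rfl fun i' _ => ?_
  ring

/-- Adjoint of a Kraus-presented channel applied to an effect. -/
def adjK {n : ℕ} {r : ℕ} (K : Fin r → Matrix (Fin n) (Fin n) ℂ)
    (E : Matrix (Fin n) (Fin n) ℂ) : Matrix (Fin n) (Fin n) ℂ :=
  ∑ i, (K i)ᴴ * E * K i

lemma adjK_posSemidef {n r : ℕ} {K : Fin r → Matrix (Fin n) (Fin n) ℂ}
    {E : Matrix (Fin n) (Fin n) ℂ} (hE : E.PosSemidef) : (adjK K E).PosSemidef :=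
  posSemidef_sum fun i => hE.conjTranspose_mul_mul_same (K i)

/-- tr[(E ⊗ F) · (Φ⊗Λ)(ρ)] = tr[(Φ†E ⊗ Λ†F) · ρ] for Kraus-presented channels. -/
lemma trace_tensorMap {a b r s : ℕ}
    (K : Fin r → Matrix (Fin a) (Fin a) ℂ) (M : Fin s → Matrix (Fin b) (Fin b) ℂ)
    (E : Matrix (Fin a) (Fin a) ℂ) (F : Matrix (Fin b) (Fin b) ℂ)
    (ρ : Matrix (Fin a × Fin b) (Fin a × Fin b) ℂ) :
    ((E ⊗ₖ F) *
      tensorMap (fun X => ∑ i, K i * X * (K i)ᴴ) (fun X => ∑ j, M j * X * (M j)ᴴ) ρ).trace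
      = ((adjK K E ⊗ₖ adjK M F) * ρ).trace := by
  rw [tensorMap_kraus, adjK, adjK, kron_sum_sum]
  rw [Finset.sum_mul, Matrix.trace_sum]
  rw [Finset.mul_sum, Matrix.trace_sum]
  refine Finset.sum_congr rfl fun i _ => ?_
  rw [Finset.sum_mul, Matrix.trace_sum, Finset.mul_sum, Matrix.trace_sum]
  refine Finset.sum_congr rfl fun j _ => ?_
  rw [show E ⊗ₖ F * (K i ⊗ₖ M j * ρ * (K i ⊗ₖ M j)ᴴ)
      = (E ⊗ₖ F * (K i ⊗ₖ M j)) * ρ * (K i ⊗ₖ M j)ᴴ by noncomm_ring]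
  rw [Matrix.trace_mul_cycle, conjTranspose_kron, mul_kronecker_mul, mul_kronecker_mul]
  simp [Matrix.mul_assoc]

/-- tr(F · Λ(σ)) = tr(Λ†(F) · σ) -/
lemma trace_adj {n r : ℕ} (M : Fin r → Matrix (Fin n) (Fin n) ℂ)
    (F σ : Matrix (Fin n) (Fin n) ℂ) :
    (F * ∑ j, M j * σ * (M j)ᴴ).trace = (adjK M F * σ).trace := by
  rw [adjK, Finset.mul_sum, Matrix.trace_sum, Finset.sum_mul, Matrix.trace_sum]
  refine Finset.sum_congr rfl fun j _ => ?_
  rw [show F * (M j * σ * (M j)ᴴ) = (F * M j) * σ * (M j)ᴴ by noncomm_ring,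
      Matrix.trace_mul_cycle]
  simp [Matrix.mul_assoc]

lemma adjK_sum {n r : ℕ} (K : Fin r → Matrix (Fin n) (Fin n) ℂ) {A : Type*} [Fintype A]
    (E : A → Matrix (Fin n) (Fin n) ℂ) :
    ∑ α, adjK K (E α) = adjK K (∑ α, E α) := by
  simp only [adjK, Finset.mul_sum, Finset.sum_mul]
  rw [Finset.sum_comm]

lemma adjK_one {n r : ℕ} (K : Fin r → Matrix (Fin n) (Fin n) ℂ)
    (h1 : ∑ i, (K i)ᴴ * K i = 1) : adjK K 1 = 1 := by
  simpa [adjK] using h1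


/-- A convex combination of products of local channels (an LOSR
channel) applied to an A→B unsteerable state yields an A→B unsteerable state. -/
theorem unsteerable_losr_closed {a b L₀ : ℕ} (q : Fin L₀ → ℝ)
    (hq : ∀ ν, 0 ≤ q ν) (hq1 : ∑ ν, q ν = 1)
    (𝒜 : Fin L₀ → (Matrix (Fin a) (Fin a) ℂ → Matrix (Fin a) (Fin a) ℂ))
    (ℬ : Fin L₀ → (Matrix (Fin b) (Fin b) ℂ → Matrix (Fin b) (Fin b) ℂ))
    (h𝒜 : ∀ ν, IsCPTP (𝒜 ν)) (hℬ : ∀ ν, IsCPTP (ℬ ν))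
    (ρ : Matrix (Fin a × Fin b) (Fin a × Fin b) ℂ) (hρ : IsDensity ρ)
    (hun : Unsteerable ρ) :
    Unsteerable (∑ ν, q ν • tensorMap (𝒜 ν) (ℬ ν) ρ) := by
  choose r K hK hK1 using h𝒜
  choose s Mk hM hM1 using hℬ
  intro X A Y B _ _ _ _ E F hEpos hE1 hFpos hF1
  obtain ⟨L, p, P, σ, hp0, hp1, hP0, hP1, hσ, hcorr⟩ :=
    hun (Fin L₀ × X) A (Fin L₀ × Y) B
      (fun νx α => adjK (K νx.1) (E νx.2 α))
      (fun νy β => adjK (Mk νy.1) (F νy.2 β))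
      (fun νx α => adjK_posSemidef (hEpos _ _))
      (fun νx => by rw [adjK_sum, hE1, adjK_one _ (hK1 νx.1)])
      (fun νy β => adjK_posSemidef (hFpos _ _))
      (fun νy => by rw [adjK_sum, hF1, adjK_one _ (hM1 νy.1)])
  set e := finProdFinEquiv (m := L₀) (n := L) with he
  have reidx : ∀ (g : Fin (L₀ * L) → ℝ), ∑ l', g l' = ∑ ν, ∑ l, g (e (ν, l)) := by
    intro g
    have h1 : ∑ pr : Fin L₀ × Fin L, g (e pr) = ∑ ν, ∑ l, g (e (ν, l)) :=
      Fintype.sum_prod_type (f := fun pr => g (e pr))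
    rw [← h1]
    exact (Fintype.sum_equiv e _ g (fun _ => rfl)).symm
  refine ⟨L₀ * L, fun l' => q (e.symm l').1 * p (e.symm l').2,
    fun x α l' => P ((e.symm l').1, x) α (e.symm l').2,
    fun l' => ℬ (e.symm l').1 (σ (e.symm l').2),
    fun l' => mul_nonneg (hq _) (hp0 _), ?_,
    fun x α l' => hP0 _ _ _, fun x l' => hP1 _ _, ?_, ?_⟩
  · rw [reidx]
    simp only [Equiv.symm_apply_apply]
    rw [← hq1]
    refine Finset.sum_congr rfl fun ν _ => ?_
    rw [← Finset.mul_sum, hp1, mul_one]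
  · intro l'
    show IsDensity (ℬ (e.symm l').1 (σ (e.symm l').2))
    rw [hM]
    refine ⟨posSemidef_sum fun j => (hσ _).1.mul_mul_conjTranspose_same _, ?_⟩
    have h := trace_adj (Mk (e.symm l').1) 1 (σ (e.symm l').2)
    rw [one_mul, adjK_one _ (hM1 _), one_mul] at h
    rw [h, (hσ _).2]
  · intro x α y β
    rw [Finset.mul_sum, Matrix.trace_sum, Complex.re_sum, reidx]
    simp only [Equiv.symm_apply_apply]
    refine Finset.sum_congr rfl fun ν _ => ?_
    have hA : 𝒜 ν = fun X => ∑ i, K ν i * X * (K ν i)ᴴ := funext (hK ν)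
    have hB : ℬ ν = fun X => ∑ j, Mk ν j * X * (Mk ν j)ᴴ := funext (hM ν)
    rw [mul_smul_comm, Matrix.trace_smul, Complex.smul_re, hA, hB, trace_tensorMap]
    have hc := hcorr (ν, x) α (ν, y) β
    simp only at hc
    rw [hc, smul_eq_mul, Finset.mul_sum]
    refine Finset.sum_congr rfl fun l _ => ?_
    simp only [Equiv.symm_apply_apply]
    rw [trace_adj]
    ring

end
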